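/- In the free dialgebra Di⟨X⟩, let T be the set of polynomials [u]_m ⊢ [v]_n − [v]_n ⊢ [u]_m and [u]_m ⊣ [v]_n − [v]_n ⊣ [u]_m over all normal diwords, and let S be the set of polynomials [u]_m − ⌊u⌋_m for |u| = 2 together with [v]_n − ⌊v⌋₁ for |v| ≥ 3. Then the two-sided dialgebra ideal generated by T equals the ideal generated by S. -/

import Mathlib

variable {X : Type*} [LinearOrder X] {k : Type*} [Field k]

/-- (u,m) ⊢ (v,n) = (uv, |u| + n). -/
def opL (a b : List X × ℕ) : List X × ℕ := (a.1 ++ b.1, a.1.length + b.2)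

/-- (u,m) ⊣ (v,n) = (uv, m). -/
def opR (a b : List X × ℕ) : List X × ℕ := (a.1 ++ b.1, a.2)

/-- (u,m) ∈ [X⁺]_ω. -/
def IsND (p : List X × ℕ) : Prop := p.1 ≠ [] ∧ 1 ≤ p.2 ∧ p.2 ≤ p.1.length

/-- Bilinear extension of an operation on monomials to the free dialgebra Di⟨X⟩. -/
noncomputable def dmul (op : (List X × ℕ) → (List X × ℕ) → (List X × ℕ))
    (f g : (List X × ℕ) →₀ k) : (List X × ℕ) →₀ k :=
  f.sum fun a ca => g.sum fun b cb => Finsupp.single (op a b) (ca * cb)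

/-- The two-sided dialgebra ideal of Di⟨X⟩ generated by a set T. -/
noncomputable def diIdeal (T : Set ((List X × ℕ) →₀ k)) :
    Submodule k ((List X × ℕ) →₀ k) :=
  sInf {I | T ⊆ I ∧ ∀ a ∈ I, ∀ g : (List X × ℕ) →₀ k,
    dmul opL g a ∈ I ∧ dmul opL a g ∈ I ∧ dmul opR g a ∈ I ∧ dmul opR a g ∈ I}

/-- ⌊u⌋: the nondecreasing rearrangement of u. -/
def sortW (u : List X) : List X := u.insertionSort (· ≤ ·)

/-- T: the commutativity relations [u]_m ⊢ [v]_n − [v]_n ⊢ [u]_m and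
[u]_m ⊣ [v]_n − [v]_n ⊣ [u]_m over all normal diwords. -/
def Tset : Set ((List X × ℕ) →₀ k) :=
  {h | ∃ a b : List X × ℕ, IsND a ∧ IsND b ∧
    (h = Finsupp.single (opL a b) 1 - Finsupp.single (opL b a) 1 ∨
     h = Finsupp.single (opR a b) 1 - Finsupp.single (opR b a) 1)}

/-- S: [u]_m − ⌊u⌋_m for |u| = 2, and [v]_n − ⌊v⌋₁ for |v| ≥ 3. -/
def Sset : Set ((List X × ℕ) →₀ k) :=
  {h | ∃ u : List X, ∃ m : ℕ, u.length = 2 ∧ 1 ≤ m ∧ m ≤ u.length ∧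
    h = Finsupp.single (u, m) 1 - Finsupp.single (sortW u, m) 1} ∪
  {h | ∃ v : List X, ∃ n : ℕ, 3 ≤ v.length ∧ 1 ≤ n ∧ n ≤ v.length ∧
    h = Finsupp.single (v, n) 1 - Finsupp.single (sortW v, 1) 1}

/-! ### Auxiliary lemmas -/

lemma sortW_perm (u : List X) : (sortW u).Perm u := List.perm_insertionSort _ u

lemma sortW_eq_of_perm {u v : List X} (h : u.Perm v) : sortW u = sortW v := by
  exact List.Perm.eq_of_pairwise' (r := fun a b : X => a ≤ b)
    (List.pairwise_insertionSort _ u) (List.pairwise_insertionSort _ v)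
    (((sortW_perm u).trans h).trans (sortW_perm v).symm)

lemma dmul_single_single (op : (List X × ℕ) → (List X × ℕ) → (List X × ℕ))
    (a b : List X × ℕ) (c d : k) :
    dmul op (Finsupp.single a c) (Finsupp.single b d) = Finsupp.single (op a b) (c * d) := by
  unfold dmul
  rw [Finsupp.sum_single_index, Finsupp.sum_single_index]
  · simp
  · rw [Finsupp.sum_single_index] <;> simp

lemma dmul_sub_left (op : (List X × ℕ) → (List X × ℕ) → (List X × ℕ))
    (f f' g : (List X × ℕ) →₀ k) :
    dmul op (f - f') g = dmul op f g - dmul op f' g := by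
  unfold dmul
  rw [Finsupp.sum_sub_index]
  intro a b₁ b₂
  rw [← Finsupp.sum_sub]
  congr 1
  ext b cb
  rw [sub_mul, Finsupp.single_sub]

lemma dmul_sub_right (op : (List X × ℕ) → (List X × ℕ) → (List X × ℕ))
    (f g g' : (List X × ℕ) →₀ k) :
    dmul op f (g - g') = dmul op f g - dmul op f g' := by
  unfold dmul
  rw [← Finsupp.sum_sub]
  congr 1
  ext a ca
  rw [Finsupp.sum_sub_index]
  intro b b₁ b₂
  rw [mul_sub, Finsupp.single_sub]

lemma mem_diIdeal_of_mem {T : Set ((List X × ℕ) →₀ k)} {x : (List X × ℕ) →₀ k}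
    (h : x ∈ T) : x ∈ diIdeal T := by
  rw [diIdeal, Submodule.mem_sInf]
  intro I hI
  exact hI.1 h

lemma diIdeal_closed {T : Set ((List X × ℕ) →₀ k)} {a : (List X × ℕ) →₀ k}
    (h : a ∈ diIdeal T) (g : (List X × ℕ) →₀ k) :
    dmul opL g a ∈ diIdeal T ∧ dmul opL a g ∈ diIdeal T ∧
    dmul opR g a ∈ diIdeal T ∧ dmul opR a g ∈ diIdeal T := by
  simp only [diIdeal, Submodule.mem_sInf, Set.mem_setOf_eq] at h ⊢
  refine ⟨?_, ?_, ?_, ?_⟩ <;>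
    · intro I hI
      have := hI.2 a (h I hI) g
      tauto

/-- Relatedness of two monomials modulo diIdeal T. -/
def DRel (T : Set ((List X × ℕ) →₀ k)) (p q : List X × ℕ) : Prop :=
  Finsupp.single p (1 : k) - Finsupp.single q 1 ∈ diIdeal T

lemma DRel.refl (T : Set ((List X × ℕ) →₀ k)) (p : List X × ℕ) : DRel T p p := by
  simp [DRel]

lemma DRel.symm {T : Set ((List X × ℕ) →₀ k)} {p q : List X × ℕ}
    (h : DRel T p q) : DRel T q p := by
  have := Submodule.neg_mem _ h
  rwa [neg_sub] at this

lemma DRel.trans {T : Set ((List X × ℕ) →₀ k)} {p q r : List X × ℕ}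
    (h1 : DRel T p q) (h2 : DRel T q r) : DRel T p r := by
  have := Submodule.add_mem _ h1 h2
  rwa [sub_add_sub_cancel] at this

lemma DRel.mul_left {T : Set ((List X × ℕ) →₀ k)}
    (op : (List X × ℕ) → (List X × ℕ) → (List X × ℕ))
    (hop : op = opL ∨ op = opR) {p q : List X × ℕ}
    (h : DRel T p q) (c : List X × ℕ) : DRel T (op c p) (op c q) := by
  have key : dmul op (Finsupp.single c (1:k))
      (Finsupp.single p (1:k) - Finsupp.single q 1) ∈ diIdeal T := by
    rcases hop with rfl | rfl
    · exact (diIdeal_closed h _).1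
    · exact (diIdeal_closed h _).2.2.1
  rwa [dmul_sub_right, dmul_single_single, dmul_single_single, one_mul] at key

lemma DRel.mul_right {T : Set ((List X × ℕ) →₀ k)}
    (op : (List X × ℕ) → (List X × ℕ) → (List X × ℕ))
    (hop : op = opL ∨ op = opR) {p q : List X × ℕ}
    (h : DRel T p q) (c : List X × ℕ) : DRel T (op p c) (op q c) := by
  have key : dmul op (Finsupp.single p (1:k) - Finsupp.single q 1)
      (Finsupp.single c (1:k)) ∈ diIdeal T := by
    rcases hop with rfl | rfl
    · exact (diIdeal_closed h _).2.1
    · exact (diIdeal_closed h _).2.2.2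
  rwa [dmul_sub_left, dmul_single_single, dmul_single_single, one_mul] at key

/-- Base relations from Tset. -/
lemma rel_T_opR {a b : List X × ℕ} (ha : IsND a) (hb : IsND b) :
    DRel (Tset (X := X) (k := k)) (opR a b) (opR b a) :=
  mem_diIdeal_of_mem ⟨a, b, ha, hb, Or.inr rfl⟩

lemma rel_T_opL {a b : List X × ℕ} (ha : IsND a) (hb : IsND b) :
    DRel (Tset (X := X) (k := k)) (opL a b) (opL b a) :=
  mem_diIdeal_of_mem ⟨a, b, ha, hb, Or.inl rfl⟩

lemma isND_single (x : X) : IsND (([x], 1) : List X × ℕ) := by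
  refine ⟨by simp, le_refl _, by simp⟩

/-- Rotation relation from ⊣-commutativity. -/
lemma rel_rotR {u v : List X} {m n : ℕ} (hu : u ≠ []) (hv : v ≠ [])
    (hm1 : 1 ≤ m) (hm2 : m ≤ u.length) (hn1 : 1 ≤ n) (hn2 : n ≤ v.length) :
    DRel (Tset (X := X) (k := k)) (u ++ v, m) (v ++ u, n) := by
  have h := rel_T_opR (k := k) (a := (u, m)) (b := (v, n)) ⟨hu, hm1, hm2⟩ ⟨hv, hn1, hn2⟩
  simpa [opR] using h

/-- Rotation relation from ⊢-commutativity. -/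
lemma rel_rotL {u v : List X} {m n : ℕ} (hu : u ≠ []) (hv : v ≠ [])
    (hm1 : 1 ≤ m) (hm2 : m ≤ u.length) (hn1 : 1 ≤ n) (hn2 : n ≤ v.length) :
    DRel (Tset (X := X) (k := k)) (u ++ v, u.length + n) (v ++ u, v.length + m) := by
  have h := rel_T_opL (k := k) (a := (u, m)) (b := (v, n)) ⟨hu, hm1, hm2⟩ ⟨hv, hn1, hn2⟩
  simpa [opL] using h

/-- Permutation relation at index 1. -/
lemma rel_perm {u v : List X} (h : u.Perm v) :
    DRel (Tset (X := X) (k := k)) (u, 1) (v, 1) := by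
  induction h with
  | nil => exact DRel.refl _ _
  | cons x h ih =>
      have := ih.mul_left opR (Or.inr rfl) (([x], 1) : List X × ℕ)
      simpa [opR] using this
  | swap x y l =>
      have base : DRel (Tset (X := X) (k := k)) (([y, x], 1) : List X × ℕ) (([x, y], 1)) := by
        have := rel_T_opR (k := k) (isND_single y) (isND_single x)
        simpa [opR] using this
      have := base.mul_right opR (Or.inr rfl) ((l, 1) : List X × ℕ)
      simpa [opR] using this
  | trans _ _ ih1 ih2 => exact ih1.trans ih2

/-- Index reduction: for 1 ≤ n < |v|, (v,n) is related to a rotation at index 1. -/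
lemma rel_rot_one {v : List X} {n : ℕ} (h1 : 1 ≤ n) (h2 : n < v.length) :
    DRel (Tset (X := X) (k := k)) (v, n) (v.drop n ++ v.take n, 1) := by
  have htake : (v.take n).length = n := by
    rw [List.length_take]; omega
  have h := rel_rotR (k := k) (u := v.take n) (v := v.drop n)
    (m := n) (n := 1) ?_ ?_ h1 ?_ le_rfl ?_
  · rwa [List.take_append_drop] at h
  · intro hc; apply_fun List.length at hc; simp [htake] at hc; omega
  · intro hc; apply_fun List.length at hc; simp [List.length_drop] at hc; omega
  · omega
  · rw [List.length_drop]; omega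

/-- Main lemma: any diword of length ≥ 3 is related to the sorted diword at index 1. -/
lemma rel_to_sorted {v : List X} {n : ℕ} (h3 : 3 ≤ v.length)
    (h1 : 1 ≤ n) (h2 : n ≤ v.length) :
    DRel (Tset (X := X) (k := k)) (v, n) (sortW v, 1) := by
  have hstep : ∃ v' : List X, v'.Perm v ∧ DRel (Tset (X := X) (k := k)) (v, n) (v', 1) := by
    rcases lt_or_eq_of_le h2 with hlt | heq
    · refine ⟨v.drop n ++ v.take n, ?_, rel_rot_one h1 hlt⟩
      exact (List.perm_append_comm).trans (by rw [List.take_append_drop])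
    · -- n = v.length
      have hne : v ≠ [] := by intro hc; subst hc; simp at h3
      set u := v.dropLast with hu
      set x := v.getLast hne with hx
      have hvux : u ++ [x] = v := List.dropLast_append_getLast hne
      have hulen : u.length = v.length - 1 := by
        rw [hu, List.length_dropLast]
      have hune : u ≠ [] := by
        intro hc; rw [hc] at hvux; simp at hvux
        apply_fun List.length at hvux; simp at hvux; omega
      have step1 : DRel (Tset (X := X) (k := k)) (v, n) ((x :: u : List X), 2) := by
        have h := rel_rotL (k := k) (u := u) (v := [x]) (m := 1) (n := 1)
          hune (by simp) le_rfl (by omega) le_rfl (by simp)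
        simp only [List.length_cons, List.length_nil, List.singleton_append] at h
        rw [hvux] at h
        have hn' : u.length + 1 = n := by omega
        rw [hn'] at h
        convert h using 2
      have step2 : DRel (Tset (X := X) (k := k)) ((x :: u : List X), 2)
          (((x :: u).drop 2 ++ (x :: u).take 2 : List X), 1) := by
        apply rel_rot_one (by omega)
        simp only [List.length_cons]
        omega
      refine ⟨(x :: u).drop 2 ++ (x :: u).take 2, ?_, step1.trans step2⟩
      refine (List.perm_append_comm).trans ?_
      rw [List.take_append_drop]
      rw [← hvux]
      exact List.perm_append_comm (l₁ := [x]) (l₂ := u)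
  obtain ⟨v', hperm, hrel⟩ := hstep
  exact hrel.trans (rel_perm (hperm.trans (sortW_perm v).symm))

lemma sortW_pair (x y : X) :
    sortW [x, y] = if x ≤ y then [x, y] else [y, x] := by
  simp [sortW, List.insertionSort, List.orderedInsert]

/-- S ⊆ diIdeal T. -/
lemma Sset_subset : Sset (X := X) (k := k) ⊆ diIdeal (Tset (X := X) (k := k)) := by
  rintro h (⟨u, m, hlen, hm1, hm2, rfl⟩ | ⟨v, n, h3, hn1, hn2, rfl⟩)
  · -- length 2 case
    match u, hlen with
    | [x, y], _ =>
      rw [sortW_pair]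
      by_cases hxy : x ≤ y
      · simp [hxy]
      · rw [if_neg hxy]
        rw [List.length_cons, List.length_cons, List.length_nil] at hm2
        interval_cases m
        · have := rel_T_opR (k := k) (isND_single x) (isND_single y)
          simpa [opR, DRel] using this
        · have := rel_T_opL (k := k) (isND_single x) (isND_single y)
          simpa [opL, DRel] using this
  · exact rel_to_sorted h3 hn1 hn2

/-- Two permuted diwords with matching indices, both valid, are related mod S. -/
lemma rel_S_of_perm {w1 w2 : List X} {i1 i2 : ℕ} (hp : w1.Perm w2)
    (hL : 2 ≤ w1.length) (hi1a : 1 ≤ i1) (hi1b : i1 ≤ w1.length)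
    (hi2a : 1 ≤ i2) (hi2b : i2 ≤ w2.length)
    (heq2 : w1.length = 2 → i1 = i2) :
    DRel (Sset (X := X) (k := k)) (w1, i1) (w2, i2) := by
  have hlen : w1.length = w2.length := hp.length_eq
  have hsort : sortW w1 = sortW w2 := sortW_eq_of_perm hp
  rcases eq_or_lt_of_le hL with h2 | h3
  · -- length exactly 2
    have hii : i1 = i2 := heq2 h2.symm
    subst hii
    have s1 : Finsupp.single (w1, i1) (1:k) - Finsupp.single (sortW w1, i1) 1 ∈
        diIdeal (Sset (X := X) (k := k)) :=
      mem_diIdeal_of_mem (Or.inl ⟨w1, i1, h2.symm, hi1a, hi1b, rfl⟩)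
    have s2 : Finsupp.single (w2, i1) (1:k) - Finsupp.single (sortW w2, i1) 1 ∈
        diIdeal (Sset (X := X) (k := k)) :=
      mem_diIdeal_of_mem (Or.inl ⟨w2, i1, by omega, hi1a, by omega, rfl⟩)
    have := Submodule.sub_mem _ s1 s2
    rw [hsort] at this
    simpa [DRel, sub_sub_sub_cancel_right] using this
  · -- length ≥ 3
    have s1 : Finsupp.single (w1, i1) (1:k) - Finsupp.single (sortW w1, 1) 1 ∈
        diIdeal (Sset (X := X) (k := k)) :=
      mem_diIdeal_of_mem (Or.inr ⟨w1, i1, by omega, hi1a, hi1b, rfl⟩)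
    have s2 : Finsupp.single (w2, i2) (1:k) - Finsupp.single (sortW w2, 1) 1 ∈
        diIdeal (Sset (X := X) (k := k)) :=
      mem_diIdeal_of_mem (Or.inr ⟨w2, i2, by omega, hi2a, hi2b, rfl⟩)
    have := Submodule.sub_mem _ s1 s2
    rw [hsort] at this
    simpa [DRel, sub_sub_sub_cancel_right] using this

/-- T ⊆ diIdeal S. -/
lemma Tset_subset : Tset (X := X) (k := k) ⊆ diIdeal (Sset (X := X) (k := k)) := by
  rintro h ⟨⟨u, m⟩, ⟨v, n⟩, ⟨hu, hm1, hm2⟩, ⟨hv, hn1, hn2⟩, rfl | rfl⟩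
  · -- opL case
    have hu1 : 1 ≤ u.length := List.length_pos_iff.mpr hu
    have hv1 : 1 ≤ v.length := List.length_pos_iff.mpr hv
    have hm2' : m ≤ u.length := hm2
    have hn2' : n ≤ v.length := hn2
    have hm1' : 1 ≤ m := hm1
    have hn1' : 1 ≤ n := hn1
    show DRel (Sset (X := X) (k := k)) (opL (u, m) (v, n)) (opL (v, n) (u, m))
    simp only [opL]
    refine rel_S_of_perm List.perm_append_comm ?_ ?_ ?_ ?_ ?_ ?_ <;>
      (try simp only [List.length_append]) <;> omega
  · -- opR case
    have hu1 : 1 ≤ u.length := List.length_pos_iff.mpr hu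
    have hv1 : 1 ≤ v.length := List.length_pos_iff.mpr hv
    have hm2' : m ≤ u.length := hm2
    have hn2' : n ≤ v.length := hn2
    have hm1' : 1 ≤ m := hm1
    have hn1' : 1 ≤ n := hn1
    show DRel (Sset (X := X) (k := k)) (opR (u, m) (v, n)) (opR (v, n) (u, m))
    simp only [opR]
    refine rel_S_of_perm List.perm_append_comm ?_ ?_ ?_ ?_ ?_ ?_ <;>
      (try simp only [List.length_append]) <;> omega

/-- Over a well-ordered alphabet X, the dialgebra ideal generated by
the commutativity relations T equals the ideal generated by S. -/
theorem stmt18 (hwo : WellFoundedLT X) :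
    diIdeal (Tset (X := X) (k := k)) = diIdeal (Sset (X := X) (k := k)) := by
  apply le_antisymm
  · exact sInf_le ⟨Tset_subset, fun a ha g => diIdeal_closed ha g⟩
  · exact sInf_le ⟨Sset_subset, fun a ha g => diIdeal_closed ha g⟩
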